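/- The group K_n = ⟨a, b | b(a²b²)ⁿ = (a²b²)ⁿa, a(a²b²)^{n+1} = (a²b²)^{n+1}b⟩ has the element (a²b²)^{2n+1} central. -/

import Mathlib

open FreeGroup

def a : FreeGroup (Fin 2) := FreeGroup.of 0
def b : FreeGroup (Fin 2) := FreeGroup.of 1

/-- The relations of `K_n = ⟨a, b | b(a²b²)ⁿ = (a²b²)ⁿa, a(a²b²)^{n+1} = (a²b²)^{n+1}b⟩`. -/
def relsK (n : ℕ) : Set (FreeGroup (Fin 2)) :=
  {b * (a ^ 2 * b ^ 2) ^ n * ((a ^ 2 * b ^ 2) ^ n * a)⁻¹,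
   a * (a ^ 2 * b ^ 2) ^ (n + 1) * ((a ^ 2 * b ^ 2) ^ (n + 1) * b)⁻¹}

lemma rel_eq_one {n : ℕ} {r : FreeGroup (Fin 2)} (hr : r ∈ relsK n) :
    PresentedGroup.mk (relsK n) r = 1 := by
  have : r ∈ Subgroup.normalClosure (relsK n) :=
    Subgroup.subset_normalClosure hr
  exact (QuotientGroup.eq_one_iff r).mpr this

/-- In `K_n`, the element `(a²b²)^{2n+1}` is central. -/
theorem hn_central_in_Kn (n : ℕ) (hn : 0 < n) :
    ((PresentedGroup.of 0 : PresentedGroup (relsK n)) ^ 2 *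
        (PresentedGroup.of 1 : PresentedGroup (relsK n)) ^ 2) ^ (2 * n + 1) ∈
      Subgroup.center (PresentedGroup (relsK n)) := by
  set A : PresentedGroup (relsK n) := PresentedGroup.of 0 with hA
  set B : PresentedGroup (relsK n) := PresentedGroup.of 1 with hB
  set c : PresentedGroup (relsK n) := A ^ 2 * B ^ 2 with hc
  -- translate the relations
  have h1 : B * c ^ n = c ^ n * A := by
    have := rel_eq_one (n := n)
      (r := b * (a ^ 2 * b ^ 2) ^ n * ((a ^ 2 * b ^ 2) ^ n * a)⁻¹)
      (Set.mem_insert _ _)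
    simp only [_root_.map_mul, _root_.map_inv, map_pow] at this
    have h' : B * c ^ n * (c ^ n * A)⁻¹ = 1 := by
      simpa [a, b, hA, hB, hc, PresentedGroup.of] using this
    group at h' ⊢
    exact mul_inv_eq_one.mp (by group at h' ⊢; simpa using h')
  have h2 : A * c ^ (n + 1) = c ^ (n + 1) * B := by
    have := rel_eq_one (n := n)
      (r := a * (a ^ 2 * b ^ 2) ^ (n + 1) * ((a ^ 2 * b ^ 2) ^ (n + 1) * b)⁻¹)
      (Set.mem_insert_iff.mpr (Or.inr rfl))
    simp only [_root_.map_mul, _root_.map_inv, map_pow] at this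
    have h' : A * c ^ (n + 1) * (c ^ (n + 1) * B)⁻¹ = 1 := by
      simpa [a, b, hA, hB, hc, PresentedGroup.of] using this
    exact mul_inv_eq_one.mp (by group at h' ⊢; simpa using h')
  have hsplit : c ^ (2 * n + 1) = c ^ (n + 1) * c ^ n := by
    rw [← pow_add]; ring_nf
  have hsplit' : c ^ (2 * n + 1) = c ^ n * c ^ (n + 1) := by
    rw [← pow_add]; ring_nf
  have hAc : A * c ^ (2 * n + 1) = c ^ (2 * n + 1) * A := by
    calc A * c ^ (2 * n + 1) = A * c ^ (n + 1) * c ^ n := by rw [hsplit, mul_assoc]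
    _ = c ^ (n + 1) * (B * c ^ n) := by rw [h2, mul_assoc]
    _ = c ^ (n + 1) * (c ^ n * A) := by rw [h1]
    _ = c ^ (2 * n + 1) * A := by rw [hsplit, mul_assoc]
  have hBc : B * c ^ (2 * n + 1) = c ^ (2 * n + 1) * B := by
    calc B * c ^ (2 * n + 1) = B * c ^ n * c ^ (n + 1) := by rw [hsplit', mul_assoc]
    _ = c ^ n * (A * c ^ (n + 1)) := by rw [h1, mul_assoc]
    _ = c ^ n * (c ^ (n + 1) * B) := by rw [h2]
    _ = c ^ (2 * n + 1) * B := by rw [hsplit', mul_assoc]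
  rw [Subgroup.mem_center_iff]
  intro g
  have hg : g ∈ Subgroup.centralizer {c ^ (2 * n + 1)} := by
    refine PresentedGroup.generated_by (relsK n)
      (Subgroup.centralizer {c ^ (2 * n + 1)}) ?_ g
    intro j
    rw [Subgroup.mem_centralizer_singleton_iff]
    fin_cases j
    · exact hAc
    · exact hBc
  rw [Subgroup.mem_centralizer_singleton_iff] at hg
  exact hg
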